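/- Stabilization of the open A-type potential: for any natural numbers N < M and any α with 1 ≤ α ≤ N, the polynomial ∂F^o_{A_N}/∂t_α after the substitution t_{N+1-β} = s_β (for all 1 ≤ β ≤ N) equals the polynomial ∂F^o_{A_M}/∂t_α after the substitution t_{M+1-β} = s_β (for all 1 ≤ β ≤ M), as polynomials in t_0, s_1, ..., s_{M+1}. -/

import Mathlib

open MvPolynomial

/-- `F` is the genus-zero open potential of type `A_N`, characterized by its iterated
partial derivatives at `0`. -/
def OpenAPotential (N : ℕ) (F : MvPolynomial (Fin (N + 1)) ℚ) : Prop :=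
  ∀ (m k : ℕ) (α : Fin m → Fin (N + 1)), (∀ i, α i ≠ 0) →
    MvPolynomial.eval (fun _ => (0 : ℚ))
      ((List.ofFn α ++ List.replicate k (0 : Fin (N + 1))).foldr
        (fun i p => MvPolynomial.pderiv i p) F)
    = if (∑ i, (N + 2 - (α i : ℕ))) + k = N + 2 then ((m + k - 2).factorial : ℚ) else 0

/-- The substitution `t_{N+1-β} = s_β` (and `t_0` kept): variable `t_i` (for `i ≥ 1`)
is renamed to `s_{N+1-i}`, encoded as the variable `N+1-i ≥ 1` of `MvPolynomial ℕ ℚ`;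
`t_0` is encoded as the variable `0`. -/
def substA (N : ℕ) : Fin (N + 1) → ℕ := fun i => if i = 0 then 0 else N + 1 - (i : ℕ)


section Aux
variable {σ : Type*} [DecidableEq σ]
set_option linter.unusedSectionVars false

/-- exponent finsupp of a list of variables -/
noncomputable def expOf (L : List σ) : σ →₀ ℕ :=
  L.foldr (fun i s => Finsupp.single i 1 + s) 0

lemma expOf_nil : expOf ([] : List σ) = 0 := rfl

lemma expOf_cons (i : σ) (t : List σ) : expOf (i :: t) = Finsupp.single i 1 + expOf t := rfl

lemma expOf_apply (L : List σ) (j : σ) : expOf L j = L.count j := by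
  induction L with
  | nil => simp [expOf]
  | cons a t ih =>
    rw [expOf_cons, Finsupp.add_apply, ih, List.count_cons, Finsupp.single_apply]
    by_cases h : a = j
    · subst h; simp; omega
    · simp [h, Ne.symm h]


lemma expOf_append (L₁ L₂ : List σ) : expOf (L₁ ++ L₂) = expOf L₁ + expOf L₂ := by
  induction L₁ with
  | nil => simp [expOf_nil]
  | cons a t ih => rw [List.cons_append, expOf_cons, expOf_cons, ih, add_assoc]

lemma expOf_replicate (k : ℕ) (a : σ) : expOf (List.replicate k a) = Finsupp.single a k := by
  induction k with
  | zero => simp [expOf_nil]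
  | succ n ih =>
    rw [List.replicate_succ, expOf_cons, ih, ← Finsupp.single_add]
    congr 1
    omega

lemma expOf_length (L : List σ) : (expOf L).sum (fun _ c => c) = L.length := by
  induction L with
  | nil => simp [expOf_nil]
  | cons a t ih =>
    rw [expOf_cons, Finsupp.sum_add_index' (fun _ => rfl) (fun _ _ _ => rfl),
      Finsupp.sum_single_index rfl, ih, List.length_cons]
    omega

lemma expOf_weight (L : List σ) (g : σ → ℕ) :
    (L.map g).sum = (expOf L).sum (fun i c => c * g i) := by
  induction L with
  | nil => simp [expOf_nil]
  | cons a t ih =>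
    rw [expOf_cons, Finsupp.sum_add_index' (fun i => zero_mul (g i))
      (fun i b₁ b₂ => add_mul b₁ b₂ (g i)), Finsupp.sum_single_index (zero_mul (g a)), ← ih]
    simp [one_mul]

/-- product of factorials of exponents -/
noncomputable def phi (d : σ →₀ ℕ) : ℕ := d.prod fun _ n => n.factorial

lemma phi_pos (d : σ →₀ ℕ) : 0 < phi d :=
  Finset.prod_pos fun i _ => Nat.factorial_pos (d i)

lemma phi_zero : phi (0 : σ →₀ ℕ) = 1 := Finsupp.prod_zero_index

lemma phi_add_single (d : σ →₀ ℕ) (a : σ) :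
    phi (d + Finsupp.single a 1) = (d a + 1) * phi d := by
  have hs : (d + Finsupp.single a 1).support ⊆ d.support ∪ {a} := by
    refine Finsupp.support_add.trans ?_
    exact Finset.union_subset_union (le_refl _) Finsupp.support_single_subset
  have hs' : d.support ⊆ d.support ∪ {a} := Finset.subset_union_left
  have ha : a ∈ d.support ∪ {a} := Finset.mem_union_right _ (Finset.mem_singleton_self a)
  rw [phi, phi, Finsupp.prod_of_support_subset _ hs _ (fun _ _ => rfl),
    Finsupp.prod_of_support_subset _ hs' _ (fun _ _ => rfl),
    ← Finset.mul_prod_erase _ _ ha, ← Finset.mul_prod_erase _ _ ha]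
  have h1 : ∀ j ∈ (d.support ∪ {a}).erase a,
      ((d + Finsupp.single a 1 : σ →₀ ℕ) j).factorial = (d j).factorial := by
    intro j hj
    have : j ≠ a := (Finset.mem_erase.mp hj).1
    rw [Finsupp.add_apply, Finsupp.single_apply, if_neg (Ne.symm this), add_zero]
  rw [Finset.prod_congr rfl h1, Finsupp.add_apply, Finsupp.single_apply, if_pos rfl,
    Nat.factorial_succ, mul_assoc]

lemma coeff_pderiv (a : σ) (p : MvPolynomial σ ℚ) (d : σ →₀ ℕ) :
    coeff d (pderiv a p) = (d a + 1) * coeff (d + Finsupp.single a 1) p := by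
  induction p using MvPolynomial.induction_on' with
  | add p q hp hq => rw [map_add, coeff_add, coeff_add, hp, hq, mul_add]
  | monomial e c =>
    rw [pderiv_monomial, coeff_monomial, coeff_monomial]
    by_cases h : e = d + Finsupp.single a 1
    · subst h
      have h1 : d + Finsupp.single a 1 - Finsupp.single a 1 = d := by
        ext j
        rw [Finsupp.tsub_apply, Finsupp.add_apply]
        omega
      have h2 : (d + Finsupp.single a 1 : σ →₀ ℕ) a = d a + 1 := by
        rw [Finsupp.add_apply, Finsupp.single_apply, if_pos rfl]
      rw [if_pos h1, if_pos rfl, h2]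
      push_cast
      ring
    · rw [if_neg h, mul_zero]
      by_cases h2 : e - Finsupp.single a 1 = d
      · rw [if_pos h2]
        have hea : e a = 0 := by
          by_contra hea
          apply h
          ext j
          rw [Finsupp.add_apply, ← h2, Finsupp.tsub_apply, Finsupp.single_apply]
          by_cases hj : a = j
          · subst hj; simp; omega
          · simp [hj]
        rw [hea]
        push_cast
        ring
      · rw [if_neg h2]

lemma foldr_pderiv_coeff (L : List σ) (p : MvPolynomial σ ℚ) (d : σ →₀ ℕ) :
    (phi (d + expOf L) : ℚ) * coeff (d + expOf L) p
      = (phi d : ℚ) * coeff d (L.foldr (fun i q => pderiv i q) p) := by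
  induction L generalizing d with
  | nil => simp [expOf_nil]
  | cons a t ih =>
    rw [List.foldr_cons, _root_.coeff_pderiv, expOf_cons]
    have := ih (d + Finsupp.single a 1)
    rw [← mul_assoc, show (phi d : ℚ) * (d a + 1) = (phi (d + Finsupp.single a 1) : ℚ) by
      rw [phi_add_single]; push_cast; ring, ← this]
    congr 2 <;> rw [add_assoc, add_comm (Finsupp.single a 1)]

end Aux
section Pot
set_option linter.unusedSectionVars false
variable {N : ℕ} {F : MvPolynomial (Fin (N + 1)) ℚ}

lemma potential_coeff (hF : OpenAPotential N F) (d : Fin (N + 1) →₀ ℕ) :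
    (phi d : ℚ) * coeff d F
      = if (d.erase 0).sum (fun i c => c * (N + 2 - (i : ℕ))) + d 0 = N + 2
        then (((d.sum fun _ c => c) - 2).factorial : ℚ) else 0 := by
  classical
  set d₁ := d.erase 0 with hd₁
  set l := (Finsupp.toMultiset d₁).toList with hl
  have hcount : ∀ j, l.count j = d₁ j := by
    intro j
    rw [hl, ← Multiset.coe_count, Multiset.coe_toList, Finsupp.count_toMultiset]
  have hexp : expOf l = d₁ := by
    ext j; rw [expOf_apply, hcount]
  have hne : ∀ i : Fin l.length, l.get i ≠ 0 := by
    intro i h0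
    have hmem : l.get i ∈ l := List.get_mem l i
    have hpos : 0 < l.count (l.get i) := List.count_pos_iff.mpr hmem
    rw [h0, hcount] at hpos
    rw [hd₁, Finsupp.erase_same] at hpos
    exact Nat.lt_irrefl 0 hpos
  have key := hF l.length (d 0) (fun i => l.get i) hne
  have hofn : List.ofFn (fun i => l.get i) = l := List.ofFn_get l
  rw [hofn] at key
  -- rewrite eval at 0 as coeff 0
  rw [MvPolynomial.eval_zero', MvPolynomial.constantCoeff_eq] at key
  have hfold := foldr_pderiv_coeff (l ++ List.replicate (d 0) (0 : Fin (N + 1))) F 0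
  have hexpL : expOf (l ++ List.replicate (d 0) (0 : Fin (N + 1))) = d := by
    rw [expOf_append, expOf_replicate, hexp, hd₁, Finsupp.erase_add_single]
  rw [zero_add, hexpL, phi_zero, Nat.cast_one, one_mul] at hfold
  rw [hfold, key]
  have hsum : (∑ i : Fin l.length, (N + 2 - ((l.get i : Fin (N + 1)) : ℕ)))
      = d₁.sum (fun i c => c * (N + 2 - (i : ℕ))) := by
    have h1 : (l.map (fun j : Fin (N + 1) => N + 2 - (j : ℕ))).sum
        = ∑ i : Fin l.length, (N + 2 - ((l.get i : Fin (N + 1)) : ℕ)) := by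
      conv_lhs => rw [← hofn, List.map_ofFn]
      rw [List.sum_ofFn]
      rfl
    rw [← h1, expOf_weight, hexp]
  have hlen : d₁.sum (fun _ c => c) = l.length := by
    rw [← hexp]; exact expOf_length l
  have htot : d.sum (fun _ c => c) = d₁.sum (fun _ c => c) + d 0 := by
    conv_lhs => rw [← Finsupp.erase_add_single 0 d]
    rw [Finsupp.sum_add_index' (fun _ => rfl) (fun _ _ _ => rfl),
      Finsupp.sum_single_index rfl]
  rw [hsum, htot, hlen]

lemma potential_pderiv_coeff (hF : OpenAPotential N F) {α : ℕ} (hα1 : 1 ≤ α) (hα2 : α ≤ N)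
    (d : Fin (N + 1) →₀ ℕ) :
    (phi d : ℚ) * coeff d (pderiv (⟨α, by omega⟩ : Fin (N + 1)) F)
      = if (d.erase 0).sum (fun i c => c * (N + 2 - (i : ℕ))) + d 0 = α
        then ((((d.sum fun _ c => c) + 1) - 2).factorial : ℚ) else 0 := by
  classical
  set a : Fin (N + 1) := ⟨α, by omega⟩ with ha
  have ha0 : a ≠ 0 := by
    intro h
    have : (a : ℕ) = 0 := by rw [h]; rfl
    rw [ha] at this
    simp at this
    omega
  rw [_root_.coeff_pderiv, ← mul_assoc, show (phi d : ℚ) * ((d a : ℚ) + 1)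
      = (phi (d + Finsupp.single a 1) : ℚ) from by rw [phi_add_single]; push_cast; ring,
    potential_coeff hF]
  have he : (d + Finsupp.single a 1).erase 0 = d.erase 0 + Finsupp.single a 1 := by
    rw [Finsupp.erase_add, Finsupp.erase_single_ne (Ne.symm ha0)]
  have h0 : (d + Finsupp.single a 1 : Fin (N + 1) →₀ ℕ) 0 = d 0 := by
    rw [Finsupp.add_apply, Finsupp.single_apply, if_neg ha0, add_zero]
  have hS : (d.erase 0 + Finsupp.single a 1).sum (fun i c => c * (N + 2 - (i : ℕ)))
      = (d.erase 0).sum (fun i c => c * (N + 2 - (i : ℕ))) + (N + 2 - α) := by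
    rw [Finsupp.sum_add_index' (fun i : Fin (N + 1) => zero_mul (N + 2 - (i : ℕ)))
      (fun i b₁ b₂ => add_mul b₁ b₂ (N + 2 - (i : ℕ))),
      Finsupp.sum_single_index (zero_mul (N + 2 - (a : ℕ))), one_mul, ha]
  have htot : (d + Finsupp.single a 1).sum (fun _ c => c) = (d.sum fun _ c => c) + 1 := by
    rw [Finsupp.sum_add_index' (fun _ => rfl) (fun _ _ _ => rfl),
      Finsupp.sum_single_index rfl]
  rw [he, h0, hS, htot]
  have hiff : ((d.erase 0).sum (fun i c => c * (N + 2 - (i : ℕ))) + (N + 2 - α) + d 0 = N + 2)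
      ↔ ((d.erase 0).sum (fun i c => c * (N + 2 - (i : ℕ))) + d 0 = α) := by omega
  rw [if_congr hiff rfl rfl]

end Pot
section Side
set_option linter.unusedSectionVars false

lemma fin_val_ne_zero {n : ℕ} {i : Fin (n + 1)} (h : i ≠ 0) : (i : ℕ) ≠ 0 := by
  intro hh
  exact h (Fin.ext (by simpa using hh))

lemma substA_le (n : ℕ) (i : Fin (n + 1)) : substA n i ≤ n := by
  have hi := i.isLt
  by_cases h : i = 0
  · simp [substA, h]
  · have := fin_val_ne_zero h
    simp only [substA, if_neg h]
    omega

lemma substA_injective (n : ℕ) : Function.Injective (substA n) := by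
  intro i j h
  have hi := i.isLt
  have hj := j.isLt
  simp only [substA] at h
  by_cases h1 : i = 0 <;> by_cases h2 : j = 0
  · rw [h1, h2]
  · exfalso
    have hj0 : (j : ℕ) ≠ 0 := fin_val_ne_zero h2
    rw [if_pos h1, if_neg h2] at h
    omega
  · exfalso
    have hi0 : (i : ℕ) ≠ 0 := fin_val_ne_zero h1
    rw [if_neg h1, if_pos h2] at h
    omega
  · have hi0 : (i : ℕ) ≠ 0 := fin_val_ne_zero h1
    have hj0 : (j : ℕ) ≠ 0 := fin_val_ne_zero h2
    rw [if_neg h1, if_neg h2] at h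
    apply Fin.ext
    omega

lemma substA_zero (n : ℕ) : substA n 0 = 0 := by simp [substA]

lemma side_coeff {n : ℕ} {F : MvPolynomial (Fin (n + 1)) ℚ} (hF : OpenAPotential n F)
    {α : ℕ} (hα1 : 1 ≤ α) (hα2 : α ≤ n) (e : ℕ →₀ ℕ) :
    coeff e (rename (substA n) (pderiv (⟨α, by omega⟩ : Fin (n + 1)) F))
      = if (e.erase 0).sum (fun j c => c * (j + 1)) + e 0 = α
        then ((((e.sum fun _ c => c) + 1) - 2).factorial : ℚ) / (phi e : ℚ) else 0 := by
  classical
  by_cases hsup : ∀ j ∈ e.support, j ≤ n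
  · -- e is in the image of mapDomain (substA n)
    set ι : ℕ → Fin (n + 1) := fun j => if h : j ≤ n ∧ j ≠ 0 then ⟨n + 1 - j, by omega⟩ else 0
      with hι
    set dn := Finsupp.mapDomain ι e with hdn
    have hinvOn : ∀ j ∈ e.support, (substA n ∘ ι) j = id j := by
      intro j hj
      have hjn : j ≤ n := hsup j hj
      by_cases hj0 : j = 0
      · subst hj0
        simp [hι, substA]
      · have hij : ι j = ⟨n + 1 - j, by omega⟩ := dif_pos ⟨hjn, hj0⟩
        have h1v : (ι j : ℕ) = n + 1 - j := by rw [hij]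
        have h2v : ι j ≠ 0 := by
          intro hh
          rw [hh] at h1v
          simp at h1v
          omega
        simp only [Function.comp_apply, id_eq, substA]
        rw [if_neg h2v, h1v]
        omega
    have hmap : Finsupp.mapDomain (substA n) dn = e := by
      rw [hdn, ← Finsupp.mapDomain_comp, Finsupp.mapDomain_congr hinvOn,
        Finsupp.mapDomain_id]
    conv_lhs => rw [← hmap, coeff_rename_mapDomain _ (substA_injective n)]
    have hphi : phi e = phi dn := by
      rw [← hmap, phi, phi, Finsupp.prod_mapDomain_index_inj (substA_injective n)]
    have htot : e.sum (fun _ c => c) = dn.sum (fun _ c => c) := by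
      rw [← hmap, Finsupp.sum_mapDomain_index_inj (substA_injective n)]
    have he0 : e 0 = dn 0 := by
      conv_lhs => rw [← hmap]
      have h := Finsupp.mapDomain_apply (substA_injective n) dn (0 : Fin (n + 1))
      rwa [substA_zero] at h
    have herase : e.erase 0 = Finsupp.mapDomain (substA n) (dn.erase 0) := by
      rw [← hmap]
      ext j
      by_cases hj0 : j = 0
      · subst hj0
        have h := Finsupp.mapDomain_apply (substA_injective n) (dn.erase 0) (0 : Fin (n + 1))
        rw [substA_zero] at h
        rw [Finsupp.erase_same, h, Finsupp.erase_same]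
      · rw [Finsupp.erase_ne hj0]
        by_cases hjr : ∃ i, substA n i = j
        · obtain ⟨i, rfl⟩ := hjr
          have hi0 : i ≠ 0 := by
            intro hh
            exact hj0 (by rw [hh, substA_zero])
          rw [Finsupp.mapDomain_apply (substA_injective n),
            Finsupp.mapDomain_apply (substA_injective n), Finsupp.erase_ne hi0]
        · push_neg at hjr
          rw [Finsupp.mapDomain_notin_range _ _ (by
              intro hh
              obtain ⟨i, hi⟩ := hh
              exact hjr i hi),
            Finsupp.mapDomain_notin_range _ _ (by
              intro hh
              obtain ⟨i, hi⟩ := hh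
              exact hjr i hi)]
    have hW : (e.erase 0).sum (fun j c => c * (j + 1))
        = (dn.erase 0).sum (fun i c => c * (n + 2 - (i : ℕ))) := by
      rw [herase, Finsupp.sum_mapDomain_index_inj (substA_injective n)]
      apply Finsupp.sum_congr
      intro i hi
      have hi0 : i ≠ 0 := by
        intro hh
        rw [hh] at hi
        exact absurd Finsupp.erase_same (Finsupp.mem_support_iff.mp hi)
      have hiv : (i : ℕ) ≠ 0 := fin_val_ne_zero hi0
      have hilt := i.isLt
      have : substA n i = n + 1 - (i : ℕ) := if_neg hi0
      rw [this]
      congr 1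
      omega
    have hkey := potential_pderiv_coeff hF hα1 hα2 dn
    have hphi_ne : (phi dn : ℚ) ≠ 0 := Nat.cast_ne_zero.mpr (phi_pos dn).ne'
    rw [hphi, htot, he0, hW]
    by_cases hcond : (dn.erase 0).sum (fun i c => c * (n + 2 - (i : ℕ))) + dn 0 = α
    · rw [if_pos hcond, eq_div_iff hphi_ne, mul_comm, hkey, if_pos hcond]
    · rw [if_neg hcond]
      have h0 : (phi dn : ℚ) * coeff dn (pderiv (⟨α, by omega⟩ : Fin (n + 1)) F) = 0 := by
        rw [hkey, if_neg hcond]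
      exact (mul_eq_zero.mp h0).resolve_left hphi_ne
  · push_neg at hsup
    obtain ⟨j, hj, hjn⟩ := hsup
    have hcoeff : coeff e (rename (substA n) (pderiv (⟨α, by omega⟩ : Fin (n + 1)) F)) = 0 := by
      apply coeff_rename_eq_zero
      intro u hu
      exfalso
      rw [← hu] at hj
      have := Finsupp.mapDomain_support hj
      rw [Finset.mem_image] at this
      obtain ⟨i, _, hi⟩ := this
      have := substA_le n i
      omega
    rw [hcoeff, if_neg]
    intro hcond
    have hj0 : j ≠ 0 := by omega
    have hjmem : j ∈ (e.erase 0).support := by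
      rw [Finsupp.support_erase]
      exact Finset.mem_erase.mpr ⟨hj0, hj⟩
    have hle : (e.erase 0) j * (j + 1) ≤ (e.erase 0).sum (fun j c => c * (j + 1)) :=
      Finset.single_le_sum (f := fun i => (e.erase 0) i * (i + 1))
        (fun i _ => Nat.zero_le _) hjmem
    have hej : (e.erase 0) j ≠ 0 := Finsupp.mem_support_iff.mp hjmem
    have hjj : j + 1 ≤ (e.erase 0) j * (j + 1) :=
      Nat.le_mul_of_pos_left (j + 1) (Nat.pos_of_ne_zero hej)
    omega

end Side

/-- stabilization of the open A-type potential. For `N < M` and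
`1 ≤ α ≤ N`, `∂F^o_{A_N}/∂t_α` after `t_{N+1-β} = s_β` equals `∂F^o_{A_M}/∂t_α`
after `t_{M+1-β} = s_β`, as polynomials in `t_0, s_1, s_2, …`. -/
theorem openA_stabilization (N M : ℕ) (hN : 1 ≤ N) (hNM : N < M)
    (FN : MvPolynomial (Fin (N + 1)) ℚ) (hFN : OpenAPotential N FN)
    (FM : MvPolynomial (Fin (M + 1)) ℚ) (hFM : OpenAPotential M FM)
    (α : ℕ) (hα1 : 1 ≤ α) (hα2 : α ≤ N) :
    MvPolynomial.rename (substA N)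
        (MvPolynomial.pderiv (⟨α, by omega⟩ : Fin (N + 1)) FN)
      = MvPolynomial.rename (substA M)
        (MvPolynomial.pderiv (⟨α, by omega⟩ : Fin (M + 1)) FM) := by
  apply MvPolynomial.ext
  intro e
  rw [side_coeff hFN hα1 hα2 e, side_coeff hFM hα1 (by omega : α ≤ M) e]
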